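/- Let H and R be 2×2 real matrices with determinant 1 such that the pair (H, R) is resistant, and let 0 < α < β. Then the lower spectral radius satisfies ϱ̲(αH, βR) > α = √(det(αH)). More precisely, if (H, R) is (c, ε, λ)-resistant with c, ε > 0 and λ > 1, then ϱ̲(αH, βR) ≥ min{ λα, (β/α)^ε · α }. -/

import Mathlib

open MeasureTheory Filter Topology

noncomputable section

/-- The operator norm of a `d × d` real matrix induced by the Euclidean norm on `ℝ^d`. -/
noncomputable def opNorm {d : ℕ} (A : Matrix (Fin d) (Fin d) ℝ) : ℝ :=
  ‖Matrix.toEuclideanCLM (𝕜 := ℝ) (n := Fin d) A‖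

/-- The singular values of a `d × d` real matrix, in decreasing order:
`singularValues A j` is `σ_{j+1}(A)`, the `(j+1)`-st largest singular value. -/
noncomputable def singularValues {d : ℕ} (A : Matrix (Fin d) (Fin d) ℝ) : Fin d → ℝ :=
  fun j =>
    (fun i => Real.sqrt ((show (A.transpose * A).IsHermitian by
      have h := Matrix.isHermitian_conjTranspose_mul_self A
      rwa [Matrix.conjTranspose_eq_transpose_of_trivial] at h).eigenvalues i))
      (Tuple.sort (fun i => Real.sqrt ((show (A.transpose * A).IsHermitian by
      have h := Matrix.isHermitian_conjTranspose_mul_self A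
      rwa [Matrix.conjTranspose_eq_transpose_of_trivial] at h).eigenvalues i))
        (Fin.rev j))

/-- The singular value function `φ^s(A)`. -/
noncomputable def svf {d : ℕ} (s : ℝ) (A : Matrix (Fin d) (Fin d) ℝ) : ℝ :=
  if (d : ℝ) ≤ s then |A.det| ^ (s / d)
  else ∏ i : Fin d,
    if (i : ℕ) < ⌊s⌋₊ then singularValues A i
    else if (i : ℕ) = ⌊s⌋₊ then singularValues A i ^ (s - (⌊s⌋₊ : ℝ))
    else 1

/-- The product `A_{w 0} ⋯ A_{w (n-1)}` of matrices along the word `w`. -/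
noncomputable def wordProd {d n : ℕ} (A : Fin 2 → Matrix (Fin d) (Fin d) ℝ)
    (w : Fin n → Fin 2) : Matrix (Fin d) (Fin d) ℝ :=
  (List.ofFn fun j => A (w j)).prod

/-- The probability vector `(p, 1-p)`. -/
noncomputable def pvec (p : ℝ) : Fin 2 → ℝ := ![p, 1 - p]

/-- `Σ_{i₁,…,i_n ∈ {1,2}} φ^s(A_{i₁}⋯A_{i_n})^{1−q} p_{i₁}^q ⋯ p_{i_n}^q`. -/
noncomputable def Zsum (A : Fin 2 → Matrix (Fin 2) (Fin 2) ℝ) (p q s : ℝ) (n : ℕ) : ℝ :=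
  ∑ w : Fin n → Fin 2,
    svf s (wordProd A w) ^ (1 - q) * ∏ j : Fin n, pvec p (w j) ^ q

/-- `𝔯_q(A₁, A₂, p)`. -/
noncomputable def rqDim (A : Fin 2 → Matrix (Fin 2) (Fin 2) ℝ) (p q : ℝ) : ℝ :=
  sSup {s : ℝ | 0 < s ∧ Summable (fun n : ℕ => Zsum A p q s (n + 1))}

/-- `R_q(A₁, A₂, p, s)`. -/
noncomputable def Rq (A : Fin 2 → Matrix (Fin 2) (Fin 2) ℝ) (p q s : ℝ) : ℝ :=
  limUnder atTop (fun n : ℕ => (1 / (n : ℝ)) * Real.log (Zsum A p q s n))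

/-- The minimum over all words of length `n` of the norm of the corresponding product. -/
noncomputable def minNormProd (A : Fin 2 → Matrix (Fin 2) (Fin 2) ℝ) (n : ℕ) : ℝ :=
  ⨅ w : Fin n → Fin 2, opNorm (wordProd A w)

/-- The lower spectral radius `ϱ̲(A₁, A₂)`. -/
noncomputable def lsr (A : Fin 2 → Matrix (Fin 2) (Fin 2) ℝ) : ℝ :=
  limUnder atTop (fun n : ℕ => minNormProd A n ^ (1 / (n : ℝ)))

/-- Pairs of invertible `2 × 2` matrices of operator norm less than one. -/
def validPair : Set (Matrix (Fin 2) (Fin 2) ℝ × Matrix (Fin 2) (Fin 2) ℝ) :=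
  {B | IsUnit B.1 ∧ IsUnit B.2 ∧ opNorm B.1 < 1 ∧ opNorm B.2 < 1}

/-- Rotation of `ℝ²` about the origin through angle `θ`. -/
noncomputable def rot (θ : ℝ) : Matrix (Fin 2) (Fin 2) ℝ :=
  !![Real.cos θ, -Real.sin θ; Real.sin θ, Real.cos θ]

/-- `(A₁, A₂)` is `(c, ε, λ)`-resistant. -/
def ResistantWith (c ε lam : ℝ) (A : Fin 2 → Matrix (Fin 2) (Fin 2) ℝ) : Prop :=
  ∀ n : ℕ, 1 ≤ n → ∀ w : Fin n → Fin 2,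
    ((Finset.univ.filter fun j => w j = 1).card : ℝ) ≤ ε * n →
    c * lam ^ n ≤ opNorm (wordProd A w)

/-- `(A₁, A₂)` is resistant. -/
def Resistant (A : Fin 2 → Matrix (Fin 2) (Fin 2) ℝ) : Prop :=
  ∃ c > (0:ℝ), ∃ ε > (0:ℝ), ∃ lam > (1:ℝ), ResistantWith c ε lam A

/-- `ℋ`: `2 × 2` real matrices of determinant one with two unequal real eigenvalues. -/
def Hset : Set (Matrix (Fin 2) (Fin 2) ℝ) :=
  {H | H.det = 1 ∧ ∃ a b : ℝ, a ≠ b ∧ H.charpoly.IsRoot a ∧ H.charpoly.IsRoot b}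

/-- `ℰ`: `2 × 2` real matrices of determinant one with non-real eigenvalues. -/
def Eset : Set (Matrix (Fin 2) (Fin 2) ℝ) :=
  {R | R.det = 1 ∧ ∀ x : ℝ, ¬ R.charpoly.IsRoot x}


/-- Abbreviation for the space of `2 × 2` real matrices. -/
abbrev Mat2 := Matrix (Fin 2) (Fin 2) ℝ


open scoped Matrix.Norms.L2Operator

section Aux

set_option synthInstance.maxHeartbeats 1000000
set_option maxHeartbeats 1000000

lemma opNorm_smul' {d : ℕ} (c : ℝ) (A : Matrix (Fin d) (Fin d) ℝ) :
    opNorm (c • A) = |c| * opNorm A := by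
  unfold opNorm; rw [_root_.map_smul]
  rw [norm_smul c (Matrix.toEuclideanCLM (𝕜 := ℝ) (n := Fin d) A), Real.norm_eq_abs]

lemma opNorm_mul_le' {d : ℕ} (A B : Matrix (Fin d) (Fin d) ℝ) :
    opNorm (A * B) ≤ opNorm A * opNorm B := norm_mul_le A B

lemma opNorm_one' : opNorm (1 : Mat2) = 1 := by
  unfold opNorm; rw [map_one]; exact norm_one

lemma abs_entry_le_opNorm {d : ℕ} (A : Matrix (Fin d) (Fin d) ℝ) (i j : Fin d) :
    |A i j| ≤ opNorm A := by
  have h := (Matrix.toEuclideanCLM (𝕜 := ℝ) (n := Fin d) A).le_opNorm (EuclideanSpace.single j 1)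
  rw [EuclideanSpace.norm_single, norm_one, mul_one] at h
  refine le_trans ?_ h
  set y := (Matrix.toEuclideanCLM (𝕜 := ℝ) (n := Fin d) A) (EuclideanSpace.single j 1) with hy
  have h2 : WithLp.equiv 2 _ y = A.mulVec (WithLp.equiv 2 _ (EuclideanSpace.single j (1:ℝ))) :=
    Matrix.ofLp_toEuclideanCLM A _
  have h3 : y i = A i j := by
    rw [WithLp.equiv_apply, WithLp.equiv_apply, PiLp.ofLp_single, Matrix.mulVec_single] at h2
    have := congrFun h2 i
    simpa using this
  have h4 : |inner (𝕜 := ℝ) (EuclideanSpace.single i (1:ℝ)) y| ≤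
      ‖EuclideanSpace.single i (1:ℝ)‖ * ‖y‖ := abs_real_inner_le_norm _ _
  rw [EuclideanSpace.norm_single, norm_one, one_mul, EuclideanSpace.inner_single_left] at h4
  simpa [h3] using h4

lemma opNorm_nonneg' {d : ℕ} (A : Matrix (Fin d) (Fin d) ℝ) : 0 ≤ opNorm A :=
  norm_nonneg _

lemma half_le_opNorm_of_det_one (A : Mat2) (h : A.det = 1) : (2⁻¹ : ℝ) ≤ opNorm A := by
  have hdet : A 0 0 * A 1 1 - A 0 1 * A 1 0 = 1 := by rw [← Matrix.det_fin_two]; exact h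
  have h00 := abs_entry_le_opNorm A 0 0
  have h01 := abs_entry_le_opNorm A 0 1
  have h10 := abs_entry_le_opNorm A 1 0
  have h11 := abs_entry_le_opNorm A 1 1
  have hN : 0 ≤ opNorm A := opNorm_nonneg' A
  have e1 : |A 0 0 * A 1 1| ≤ opNorm A * opNorm A := by
    rw [abs_mul]; exact mul_le_mul h00 h11 (abs_nonneg _) hN
  have e2 : |A 0 1 * A 1 0| ≤ opNorm A * opNorm A := by
    rw [abs_mul]; exact mul_le_mul h01 h10 (abs_nonneg _) hN
  nlinarith [le_abs_self (A 0 0 * A 1 1), neg_abs_le (A 0 1 * A 1 0)]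

lemma listaux {d : ℕ} (s : Fin 2 → ℝ) (A : Fin 2 → Matrix (Fin d) (Fin d) ℝ) :
    ∀ l : List (Fin 2), (l.map fun i => s i • A i).prod = (l.map s).prod • (l.map A).prod := by
  intro l
  induction l with
  | nil => simp
  | cons a t ih =>
      simp only [List.map_cons, List.prod_cons, ih, smul_mul_assoc, mul_smul_comm, smul_smul,
        mul_comm]

lemma wordProd_smul {d n : ℕ} (s : Fin 2 → ℝ) (A : Fin 2 → Matrix (Fin d) (Fin d) ℝ)
    (w : Fin n → Fin 2) :
    wordProd (fun i => s i • A i) w = (∏ j, s (w j)) • wordProd A w := by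
  unfold wordProd
  have h1 : (List.ofFn fun j => s (w j) • A (w j)) = ((List.ofFn w).map fun i => s i • A i) := by
    rw [List.map_ofFn]; rfl
  have h2 : (List.ofFn fun j => A (w j)) = ((List.ofFn w).map A) := by
    rw [List.map_ofFn]; rfl
  rw [h1, h2, listaux, ← List.prod_ofFn (f := fun j => s (w j)), List.map_ofFn]; rfl

lemma wordProd_det {n : ℕ} (H R : Mat2) (hH : H.det = 1) (hR : R.det = 1)
    (w : Fin n → Fin 2) : (wordProd ![H, R] w).det = 1 := by
  unfold wordProd
  have hdm : (List.ofFn fun j => ![H,R] (w j)).prod.det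
      = Matrix.detMonoidHom (List.ofFn fun j => ![H,R] (w j)).prod := rfl
  rw [hdm, map_list_prod (Matrix.detMonoidHom : Mat2 →* ℝ)]
  have : ∀ x ∈ (List.ofFn fun j => ![H,R] (w j)).map Matrix.detMonoidHom, x = 1 := by
    intro x hx
    simp only [List.map_ofFn, List.mem_ofFn] at hx
    obtain ⟨j, rfl⟩ := hx
    have : w j = 0 ∨ w j = 1 := by omega
    rcases this with hwj | hwj <;> simp [hwj, Matrix.detMonoidHom, hH, hR]
  rw [List.prod_eq_one this]

lemma wordProd_append {d m n : ℕ} (A : Fin 2 → Matrix (Fin d) (Fin d) ℝ)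
    (w₁ : Fin m → Fin 2) (w₂ : Fin n → Fin 2) :
    wordProd A (Fin.append w₁ w₂) = wordProd A w₁ * wordProd A w₂ := by
  unfold wordProd
  rw [List.ofFn_add (f := fun j => A (Fin.append w₁ w₂ j)), List.prod_append]
  simp [Fin.append_left, Fin.append_right]

lemma prod_scalars {n : ℕ} (α β : ℝ) (w : Fin n → Fin 2) :
    ∏ j, (![α, β]) (w j)
      = α ^ (n - (Finset.univ.filter fun j => w j = 1).card)
        * β ^ (Finset.univ.filter fun j => w j = 1).card := by
  rw [← Finset.prod_filter_mul_prod_filter_not Finset.univ (fun j => w j = 1)]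
  have h1 : ∏ j ∈ Finset.univ.filter (fun j => w j = 1), (![α, β]) (w j)
      = β ^ (Finset.univ.filter fun j => w j = 1).card := by
    rw [Finset.prod_congr rfl (fun j hj => ?_), Finset.prod_const]
    rw [Finset.mem_filter] at hj
    rw [hj.2]; rfl
  have h2 : ∏ j ∈ Finset.univ.filter (fun j => ¬ w j = 1), (![α, β]) (w j)
      = α ^ (n - (Finset.univ.filter fun j => w j = 1).card) := by
    rw [Finset.prod_congr rfl (fun j hj => ?_), Finset.prod_const]
    · congr 1
      have := Finset.card_filter_add_card_filter_not (s := Finset.univ)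
        (p := fun j : Fin n => w j = 1)
      simp only [Finset.card_univ, Fintype.card_fin] at this
      omega
    · rw [Finset.mem_filter] at hj
      have : w j = 0 := by omega
      rw [this]; rfl
  rw [h1, h2, mul_comm]

/-- Key pointwise lower bound. -/
lemma key_bound (H R : Mat2) (hH : H.det = 1) (hR : R.det = 1)
    (c ε lam : ℝ) (hc : 0 < c) (hlam : 1 < lam)
    (hres : ResistantWith c ε lam ![H, R])
    (α β : ℝ) (hα : 0 < α) (hαβ : α < β) (n : ℕ) (w : Fin n → Fin 2) :
    min c 2⁻¹ * (min (lam * α) ((β / α) ^ ε * α)) ^ n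
      ≤ opNorm (wordProd ![α • H, β • R] w) := by
  have hβ : 0 < β := hα.trans hαβ
  have hba : 1 < β / α := (one_lt_div hα).mpr hαβ
  have hm1 : 0 < lam * α := by positivity
  have hm2 : 0 < (β / α) ^ ε * α := by positivity
  have hm : 0 < min (lam * α) ((β / α) ^ ε * α) := lt_min hm1 hm2
  have hC : 0 < min c 2⁻¹ := lt_min hc (by norm_num)
  set m := min (lam * α) ((β / α) ^ ε * α) with hmdef
  set k := (Finset.univ.filter fun j => w j = 1).card with hkdef
  have hkn : k ≤ n := le_trans (Finset.card_filter_le _ _) (by simp)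
  -- rewrite the scaled word product
  have hfam : ![α • H, β • R] = fun i => (![α, β]) i • (![H, R]) i := by
    funext i
    fin_cases i <;> rfl
  have hsmul : wordProd ![α • H, β • R] w
      = (α ^ (n - k) * β ^ k) • wordProd ![H, R] w := by
    rw [hfam, wordProd_smul, prod_scalars]
  have hPpos : 0 < α ^ (n - k) * β ^ k := by positivity
  have hnorm : opNorm (wordProd ![α • H, β • R] w)
      = (α ^ (n - k) * β ^ k) * opNorm (wordProd ![H, R] w) := by
    rw [hsmul, opNorm_smul', abs_of_pos hPpos]
  rcases Nat.eq_zero_or_pos n with hn0 | hn1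
  · subst hn0
    have : wordProd ![α • H, β • R] w = 1 := by
      unfold wordProd; simp
    rw [this, opNorm_one', pow_zero, mul_one]
    exact le_trans (min_le_right _ _) (by norm_num)
  rw [hnorm]
  by_cases hcase : (k : ℝ) ≤ ε * n
  · -- few rotations: use resistance
    have hres' := hres n hn1 w (by rw [← hkdef]; exact hcase)
    have hP : α ^ n ≤ α ^ (n - k) * β ^ k := by
      calc α ^ n = α ^ (n - k) * α ^ k := (pow_sub_mul_pow α hkn).symm
        _ ≤ α ^ (n - k) * β ^ k := by
            apply mul_le_mul_of_nonneg_left (pow_le_pow_left₀ hα.le hαβ.le k) (by positivity)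
    calc min c 2⁻¹ * m ^ n ≤ c * (lam * α) ^ n := by
          apply mul_le_mul (min_le_left _ _)
            (pow_le_pow_left₀ hm.le (min_le_left _ _) n) (by positivity) hc.le
      _ = α ^ n * (c * lam ^ n) := by ring
      _ ≤ (α ^ (n - k) * β ^ k) * opNorm (wordProd ![H, R] w) := by
          apply mul_le_mul hP hres' (by positivity) hPpos.le
  · -- many rotations: use determinant bound
    push_neg at hcase
    have hN : (2⁻¹ : ℝ) ≤ opNorm (wordProd ![H, R] w) :=
      half_le_opNorm_of_det_one _ (wordProd_det H R hH hR w)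
    have hP : ((β / α) ^ ε * α) ^ n ≤ α ^ (n - k) * β ^ k := by
      have e1 : α ^ (n - k) * β ^ k = α ^ n * (β / α) ^ k := by
        have : β ^ k = α ^ k * (β / α) ^ k := by
          rw [← mul_pow, mul_div_cancel₀ _ (ne_of_gt hα)]
        rw [this, ← mul_assoc, pow_sub_mul_pow α hkn]
      have e2 : ((β / α) ^ ε) ^ n ≤ (β / α) ^ k := by
        have h3 : (β / α) ^ (ε * (n : ℝ)) ≤ (β / α) ^ ((k : ℝ) : ℝ) :=
          Real.rpow_le_rpow_of_exponent_le hba.le hcase.le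
        rw [Real.rpow_natCast] at h3
        calc ((β / α) ^ ε) ^ n = (β / α) ^ (ε * (n : ℝ)) := by
              rw [← Real.rpow_natCast ((β / α) ^ ε) n,
                ← Real.rpow_mul (by positivity : (0:ℝ) ≤ β / α)]
          _ ≤ (β / α) ^ k := h3
      calc ((β / α) ^ ε * α) ^ n = ((β / α) ^ ε) ^ n * α ^ n := mul_pow _ _ _
        _ ≤ (β / α) ^ k * α ^ n := by
            apply mul_le_mul_of_nonneg_right e2 (by positivity)
        _ = α ^ (n - k) * β ^ k := by rw [e1, mul_comm]
    calc min c 2⁻¹ * m ^ n ≤ (α ^ (n - k) * β ^ k) * 2⁻¹ := by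
          rw [mul_comm (α ^ (n - k) * β ^ k)]
          apply mul_le_mul (min_le_right _ _)
            (le_trans (pow_le_pow_left₀ hm.le (min_le_right _ _) n) hP) (by positivity)
            (by norm_num)
      _ ≤ (α ^ (n - k) * β ^ k) * opNorm (wordProd ![H, R] w) :=
          mul_le_mul_of_nonneg_left hN hPpos.le

lemma minNormProd_pos_bound (H R : Mat2) (hH : H.det = 1) (hR : R.det = 1)
    (c ε lam : ℝ) (hc : 0 < c) (hlam : 1 < lam)
    (hres : ResistantWith c ε lam ![H, R])
    (α β : ℝ) (hα : 0 < α) (hαβ : α < β) (n : ℕ) :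
    min c 2⁻¹ * (min (lam * α) ((β / α) ^ ε * α)) ^ n ≤ minNormProd ![α • H, β • R] n :=
  le_ciInf fun w => key_bound H R hH hR c ε lam hc hlam hres α β hα hαβ n w

lemma minNormProd_submul (A : Fin 2 → Mat2) (m n : ℕ) :
    minNormProd A (m + n) ≤ minNormProd A m * minNormProd A n := by
  obtain ⟨w₁, hw₁⟩ := Finite.exists_min (fun w : Fin m → Fin 2 => opNorm (wordProd A w))
  obtain ⟨w₂, hw₂⟩ := Finite.exists_min (fun w : Fin n → Fin 2 => opNorm (wordProd A w))
  have e1 : minNormProd A m = opNorm (wordProd A w₁) :=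
    le_antisymm (ciInf_le (Set.Finite.bddBelow (Set.finite_range _)) w₁) (le_ciInf hw₁)
  have e2 : minNormProd A n = opNorm (wordProd A w₂) :=
    le_antisymm (ciInf_le (Set.Finite.bddBelow (Set.finite_range _)) w₂) (le_ciInf hw₂)
  calc minNormProd A (m + n) ≤ opNorm (wordProd A (Fin.append w₁ w₂)) :=
        ciInf_le (Set.Finite.bddBelow (Set.finite_range _)) _
    _ = opNorm (wordProd A w₁ * wordProd A w₂) := by rw [wordProd_append]
    _ ≤ opNorm (wordProd A w₁) * opNorm (wordProd A w₂) := opNorm_mul_le' _ _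
    _ = minNormProd A m * minNormProd A n := by rw [e1, e2]

/-- The main quantitative lemma. -/
lemma lsr_ge (H R : Mat2) (hH : H.det = 1) (hR : R.det = 1)
    (c ε lam : ℝ) (hc : 0 < c) (hlam : 1 < lam)
    (hres : ResistantWith c ε lam ![H, R])
    (α β : ℝ) (hα : 0 < α) (hαβ : α < β) :
    min (lam * α) ((β / α) ^ ε * α) ≤ lsr ![α • H, β • R] := by
  have hβ : 0 < β := hα.trans hαβ
  set A := ![α • H, β • R] with hA
  set m := min (lam * α) ((β / α) ^ ε * α) with hmdef
  set C := min c (2⁻¹ : ℝ) with hCdef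
  have hm : 0 < m := lt_min (by positivity) (by positivity)
  have hC : 0 < C := lt_min hc (by norm_num)
  have hbound : ∀ n : ℕ, C * m ^ n ≤ minNormProd A n :=
    fun n => minNormProd_pos_bound H R hH hR c ε lam hc hlam hres α β hα hαβ n
  have hpos : ∀ n : ℕ, 0 < minNormProd A n :=
    fun n => lt_of_lt_of_le (by positivity) (hbound n)
  set u : ℕ → ℝ := fun n => Real.log (minNormProd A n) with hu
  have hsub : Subadditive u := by
    intro p q
    have h1 := minNormProd_submul A p q
    calc u (p + q) ≤ Real.log (minNormProd A p * minNormProd A q) :=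
          Real.log_le_log (hpos _) h1
      _ = u p + u q := Real.log_mul (ne_of_gt (hpos p)) (ne_of_gt (hpos q))
  have hlow : ∀ n : ℕ, 1 ≤ n → Real.log C / n + Real.log m ≤ u n / n := by
    intro n hn
    have hn' : (0 : ℝ) < n := by exact_mod_cast hn
    have h1 : Real.log C + n * Real.log m ≤ u n := by
      have := Real.log_le_log (by positivity) (hbound n)
      rwa [Real.log_mul (ne_of_gt hC) (by positivity), Real.log_pow] at this
    have h2 : Real.log C / n + Real.log m = (Real.log C + n * Real.log m) / n := by
      field_simp
    rw [h2]
    gcongr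
  have hbdd : BddBelow (Set.range fun n : ℕ => u n / n) := by
    refine ⟨min 0 (-|Real.log C| + Real.log m), ?_⟩
    rintro x ⟨n, rfl⟩
    rcases Nat.eq_zero_or_pos n with hn0 | hn1
    · subst hn0; simp
    · refine le_trans (min_le_right _ _) (le_trans ?_ (hlow n hn1))
      have hn' : (1 : ℝ) ≤ n := by exact_mod_cast hn1
      have : -|Real.log C| ≤ Real.log C / n := by
        rcases le_or_gt 0 (Real.log C) with h | h
        · exact le_trans (neg_nonpos.mpr (abs_nonneg _)) (by positivity)
        · rw [abs_of_neg h, neg_neg, div_eq_mul_inv]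
          nlinarith [inv_pos.mpr (lt_of_lt_of_le one_pos hn'),
            inv_le_one_of_one_le₀ hn']
      linarith
  have htend := hsub.tendsto_lim hbdd
  have hℓ : Real.log m ≤ hsub.lim := by
    have htc : Tendsto (fun n : ℕ => Real.log C / n + Real.log m) atTop
        (𝓝 (0 + Real.log m)) :=
      (tendsto_const_div_atTop_nhds_zero_nat (Real.log C)).add tendsto_const_nhds
    rw [zero_add] at htc
    refine le_of_tendsto_of_tendsto htc htend ?_
    filter_upwards [Filter.eventually_ge_atTop 1] with n hn
    exact hlow n hn
  have htend2 : Tendsto (fun n : ℕ => minNormProd A n ^ (1 / (n : ℝ))) atTop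
      (𝓝 (Real.exp hsub.lim)) := by
    have h1 : Tendsto (fun n : ℕ => Real.exp (u n / n)) atTop (𝓝 (Real.exp hsub.lim)) :=
      (Real.continuous_exp.tendsto _).comp htend
    refine h1.congr' ?_
    filter_upwards [Filter.eventually_ge_atTop 1] with n hn
    rw [Real.rpow_def_of_pos (hpos n), mul_one_div]
  have hlsr : lsr A = Real.exp hsub.lim := htend2.limUnder_eq
  rw [hlsr, ← Real.exp_log hm]
  exact Real.exp_le_exp.mpr hℓ

end Aux

/-- If `(H,R)` is resistant with `det H = det R = 1` and `0 < α < β` then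
`ϱ̲(αH, βR) > α = √(det(αH))`; more precisely, `(c,ε,λ)`-resistance gives
`ϱ̲(αH, βR) ≥ min{λα, (β/α)^ε·α}`. -/
theorem stmt11 (H R : Mat2) (hH : H.det = 1) (hR : R.det = 1) (hres : Resistant ![H, R])
    (α β : ℝ) (hα : 0 < α) (hαβ : α < β) :
    α < lsr ![α • H, β • R] ∧ Real.sqrt ((α • H).det) = α ∧
    ∀ c > (0 : ℝ), ∀ ε > (0 : ℝ), ∀ lam > (1 : ℝ), ResistantWith c ε lam ![H, R] →
      min (lam * α) ((β / α) ^ ε * α) ≤ lsr ![α • H, β • R] := by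
  have hβ : 0 < β := hα.trans hαβ
  have hba : 1 < β / α := (one_lt_div hα).mpr hαβ
  refine ⟨?_, ?_, ?_⟩
  · obtain ⟨c, hc, ε, hε, lam, hlam, hres'⟩ := hres
    refine lt_of_lt_of_le ?_ (lsr_ge H R hH hR c ε lam hc hlam hres' α β hα hαβ)
    apply lt_min
    · nlinarith
    · have h1 : 1 < (β / α) ^ ε :=
        (Real.one_lt_rpow_iff_of_pos (by positivity)).mpr (Or.inl ⟨hba, hε⟩)
      nlinarith
  · rw [Matrix.det_smul, hH, mul_one]
    have : Fintype.card (Fin 2) = 2 := by simp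
    rw [this, Real.sqrt_sq hα.le]
  · intro c hc ε hε lam hlam hres'
    exact lsr_ge H R hH hR c ε lam hc hlam hres' α β hα hαβ

end
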